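/- Let 0 < r < ∞ be fixed and let β̃_{n,r} be random vectors in ℝ^p satisfying ‖β̃_{n,r} − β*‖ ≤ ‖β̂_n − β*‖ almost surely for every n. Then, as n → ∞, H_{n,β̃_{n,r}}(r) − H_{n,β*}(r) converges to 0 in probability, and H_{n,β̃_{n,r}}(r) − H_{n,β̂_n}(r) converges to 0 in probability. -/

import Mathlib

open MeasureTheory Filter Topology ENNReal

noncomputable section

namespace KFunCLT

/-- Points of `ℝ^d`. -/
abbrev Pt (d : ℕ) := EuclideanSpace ℝ (Fin d)

/-- The observation window `W_n = [-n^{1/d}/2, n^{1/d}/2]^d` of volume `n`. -/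
def Wn (d n : ℕ) : Set (Pt d) :=
  {x | ∀ i, |x i| ≤ (n : ℝ) ^ ((1 : ℝ) / (d : ℝ)) / 2}

/-- The window `W_n` translated by `v`. -/
def WnT (d n : ℕ) (v : Pt d) : Set (Pt d) := (fun x => x + v) '' Wn d n

/-- The edge correction factor `e_n(x,y) = |W_n ∩ W_{n,x-y}|⁻¹`. -/
def en (d n : ℕ) (x y : Pt d) : ℝ :=
  ((volume (Wn d n ∩ WnT d n (x - y))).toReal)⁻¹

/-- Pairs of distinct points of a set. -/
def pairs {α : Type*} (A : Set α) : Set (α × α) :=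
  {q | q.1 ∈ A ∧ q.2 ∈ A ∧ q.1 ≠ q.2}

/-- Triples of pairwise distinct points of a set. -/
def triples {α : Type*} (A : Set α) : Set (α × α × α) :=
  {q | q.1 ∈ A ∧ q.2.1 ∈ A ∧ q.2.2 ∈ A ∧ q.1 ≠ q.2.1 ∧ q.1 ≠ q.2.2 ∧ q.2.1 ≠ q.2.2}

/-- Quadruples of pairwise distinct points of a set. -/
def quads {α : Type*} (A : Set α) : Set (α × α × α × α) :=
  {q | q.1 ∈ A ∧ q.2.1 ∈ A ∧ q.2.2.1 ∈ A ∧ q.2.2.2 ∈ A ∧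
    q.1 ≠ q.2.1 ∧ q.1 ≠ q.2.2.1 ∧ q.1 ≠ q.2.2.2 ∧
    q.2.1 ≠ q.2.2.1 ∧ q.2.1 ≠ q.2.2.2 ∧ q.2.2.1 ≠ q.2.2.2}

/-- Sum of `f(x,y)` over pairs of distinct points `x ≠ y` of `A`. -/
def pairSum {α F : Type*} [AddCommMonoid F] [TopologicalSpace F]
    (A : Set α) (f : α → α → F) : F :=
  ∑' q : pairs A, f q.val.1 q.val.2

/-- The estimator `K̂_{n,β}(r)` of the `K`-function, using intensity parameter `β`. -/
def Khat {Ω : Type*} {d p : ℕ} (P : Ω → Set (Pt d))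
    (ρ : EuclideanSpace ℝ (Fin p) → Pt d → ℝ)
    (n : ℕ) (b : EuclideanSpace ℝ (Fin p)) (r : ℝ) (ω : Ω) : ℝ :=
  pairSum (P ω ∩ Wn d n) fun x y =>
    if ‖x - y‖ ≤ r then en d n x y / (ρ b x * ρ b y) else 0

/-- The vector `H_{n,β}(r) ∈ ℝ^p`, i.e. minus the sum over pairs of distinct points of
`P ∩ W_n` at distance at most `r` of `e_n(x,y) ∇_β log(ρ_β(x)ρ_β(y)) / (ρ_β(x)ρ_β(y))`. -/
def Hfun {Ω : Type*} {d p : ℕ} (P : Ω → Set (Pt d))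
    (ρ : EuclideanSpace ℝ (Fin p) → Pt d → ℝ)
    (n : ℕ) (b : EuclideanSpace ℝ (Fin p)) (r : ℝ) (ω : Ω) :
    EuclideanSpace ℝ (Fin p) :=
  - pairSum (P ω ∩ Wn d n) fun x y =>
      if ‖x - y‖ ≤ r then
        (en d n x y / (ρ b x * ρ b y)) •
          gradient (fun b' => Real.log (ρ b' x * ρ b' y)) b
      else (0 : EuclideanSpace ℝ (Fin p))

/-- Assumption (R): uniform bounds on `ρ_β` and its first two derivatives in `β`,
for `β` in a neighbourhood of the true parameter `β*`. -/
def AssumptionR {d p : ℕ} (ρ : EuclideanSpace ℝ (Fin p) → Pt d → ℝ)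
    (βs : EuclideanSpace ℝ (Fin p)) : Prop :=
  ∃ ε > (0 : ℝ), ∃ c₁ c₂ c₃ c₄ : ℝ, 0 < c₁ ∧ 0 < c₂ ∧ 0 < c₃ ∧ 0 < c₄ ∧
    ∀ b : EuclideanSpace ℝ (Fin p), ‖b - βs‖ ≤ ε → ∀ x : Pt d,
      c₁ < ρ b x ∧ ρ b x < c₂ ∧
      ‖fderiv ℝ (fun b' => ρ b' x) b‖ < c₃ ∧
      ‖fderiv ℝ (fun b' => fderiv ℝ (fun b'' => ρ b'' x) b') b‖ < c₄

lemma norm_smul_sub_smul {E : Type*} [NormedAddCommGroup E] [NormedSpace ℝ E]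
    (a₁ a₂ : ℝ) (v₁ v₂ : E) :
    ‖a₁ • v₁ - a₂ • v₂‖ ≤ |a₁ - a₂| * ‖v₁‖ + |a₂| * ‖v₁ - v₂‖ := by
  have h : a₁ • v₁ - a₂ • v₂ = (a₁ - a₂) • v₁ + a₂ • (v₁ - v₂) := by
    rw [sub_smul, smul_sub]; abel
  rw [h]
  refine (norm_add_le _ _).trans ?_
  rw [norm_smul, norm_smul, Real.norm_eq_abs, Real.norm_eq_abs]

lemma abs_mul_sub_mul (a₁ a₂ b₁ b₂ : ℝ) :
    |a₁ * b₁ - a₂ * b₂| ≤ |a₁ - a₂| * |b₁| + |a₂| * |b₁ - b₂| := by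
  simpa [Real.norm_eq_abs, smul_eq_mul] using norm_smul_sub_smul a₁ a₂ b₁ b₂

/-- The Lipschitz constant. -/
def Lconst (c₁ c₂ c₃ c₄ : ℝ) : ℝ :=
  (2 * c₁⁻¹ ^ 2 * (2 * c₂ * c₃ * (c₁⁻¹ ^ 2) ^ 2)) * (2 * c₂ * c₃) +
    (c₁⁻¹ ^ 2 * c₁⁻¹ ^ 2) * (2 * (c₃ * c₃ + c₂ * c₄))

lemma Lconst_pos {c₁ c₂ c₃ c₄ : ℝ} (h₁ : 0 < c₁) (h₂ : 0 < c₂) (h₃ : 0 < c₃)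
    (h₄ : 0 < c₄) : 0 < Lconst c₁ c₂ c₃ c₄ := by
  unfold Lconst; positivity

/-- Pure numeric core estimate with abstract atoms. -/
lemma core_estimate {F : Type*} [NormedAddCommGroup F] [NormedSpace ℝ F]
    {c₁ c₂ c₃ c₄ Δ : ℝ} (hc₁ : 0 < c₁) (hc₂ : 0 < c₂) (hc₃ : 0 < c₃) (hc₄ : 0 < c₄)
    (hΔ : 0 ≤ Δ)
    {f₁ g₁ f₂ g₂ : ℝ} {A₁ A₂ B₁ B₂ : F}
    (hf₁l : c₁ < f₁) (hf₁u : f₁ < c₂) (hg₁l : c₁ < g₁) (hg₁u : g₁ < c₂)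
    (hf₂l : c₁ < f₂) (hf₂u : f₂ < c₂) (hg₂l : c₁ < g₂) (hg₂u : g₂ < c₂)
    (hA₁ : ‖A₁‖ ≤ c₃) (hB₁ : ‖B₁‖ ≤ c₃)
    (hfd : |f₁ - f₂| ≤ c₃ * Δ) (hgd : |g₁ - g₂| ≤ c₃ * Δ)
    (hAd : ‖A₁ - A₂‖ ≤ c₄ * Δ) (hBd : ‖B₁ - B₂‖ ≤ c₄ * Δ) :
    ‖((f₁ * g₁)⁻¹ * (f₁ * g₁)⁻¹) • (f₁ • B₁ + g₁ • A₁) -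
      ((f₂ * g₂)⁻¹ * (f₂ * g₂)⁻¹) • (f₂ • B₂ + g₂ • A₂)‖ ≤
      Lconst c₁ c₂ c₃ c₄ * Δ := by
  have hf₁p : 0 < f₁ := hc₁.trans hf₁l
  have hg₁p : 0 < g₁ := hc₁.trans hg₁l
  have hf₂p : 0 < f₂ := hc₁.trans hf₂l
  have hg₂p : 0 < g₂ := hc₁.trans hg₂l
  set m := c₁⁻¹ ^ 2 with hmd
  have hm0 : 0 < m := by positivity
  have hmeq : m = (c₁ ^ 2)⁻¹ := by rw [hmd, inv_pow]
  set s₁ := (f₁ * g₁)⁻¹ with hs₁d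
  set s₂ := (f₂ * g₂)⁻¹ with hs₂d
  set V₁ := f₁ • B₁ + g₁ • A₁ with hV₁d
  set V₂ := f₂ • B₂ + g₂ • A₂ with hV₂d
  have habs_s : ∀ (a b : ℝ), c₁ < a → c₁ < b → |(a * b)⁻¹| ≤ m := by
    intro a b ha hb
    have ha0 : 0 < a := hc₁.trans ha
    have hb0 : 0 < b := hc₁.trans hb
    have hab : c₁ ^ 2 ≤ a * b := by nlinarith
    rw [abs_of_pos (inv_pos.2 (mul_pos ha0 hb0)), hmeq]
    exact inv_anti₀ (by positivity) hab
  have hs₁a : |s₁| ≤ m := habs_s f₁ g₁ hf₁l hg₁l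
  have hs₂a : |s₂| ≤ m := habs_s f₂ g₂ hf₂l hg₂l
  have hfgd : |f₁ * g₁ - f₂ * g₂| ≤ 2 * c₂ * c₃ * Δ := by
    have e3 : |g₁| ≤ c₂ := by rw [abs_of_pos hg₁p]; exact hg₁u.le
    have e4 : |f₂| ≤ c₂ := by rw [abs_of_pos hf₂p]; exact hf₂u.le
    calc |f₁ * g₁ - f₂ * g₂| ≤ |f₁ - f₂| * |g₁| + |f₂| * |g₁ - g₂| :=
          abs_mul_sub_mul f₁ f₂ g₁ g₂
      _ ≤ (c₃ * Δ) * c₂ + c₂ * (c₃ * Δ) :=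
          add_le_add (mul_le_mul hfd e3 (abs_nonneg _) (by positivity))
            (mul_le_mul e4 hgd (abs_nonneg _) hc₂.le)
      _ = 2 * c₂ * c₃ * Δ := by ring
  have hsd : |s₁ - s₂| ≤ 2 * c₂ * c₃ * m ^ 2 * Δ := by
    have hne₁ : f₁ * g₁ ≠ 0 := (mul_pos hf₁p hg₁p).ne'
    have hne₂ : f₂ * g₂ ≠ 0 := (mul_pos hf₂p hg₂p).ne'
    have hinv : s₁ - s₂ = (f₂ * g₂ - f₁ * g₁) / ((f₁ * g₁) * (f₂ * g₂)) := by
      rw [hs₁d, hs₂d, inv_sub_inv hne₁ hne₂]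
    have hden : c₁ ^ 2 * c₁ ^ 2 ≤ (f₁ * g₁) * (f₂ * g₂) := by
      have hd1 : c₁ ^ 2 ≤ f₁ * g₁ := by nlinarith
      have hd2 : c₁ ^ 2 ≤ f₂ * g₂ := by nlinarith
      exact mul_le_mul hd1 hd2 (by positivity) (by positivity)
    have hdenpos : (0:ℝ) < (f₁ * g₁) * (f₂ * g₂) := by positivity
    have hinvle : ((f₁ * g₁) * (f₂ * g₂))⁻¹ ≤ m ^ 2 := by
      have h := inv_anti₀ (show (0:ℝ) < c₁ ^ 2 * c₁ ^ 2 by positivity) hden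
      refine h.trans (le_of_eq ?_)
      rw [hmeq, mul_inv]; ring
    rw [hinv, abs_div, abs_of_pos hdenpos, div_eq_mul_inv]
    have hnum : |f₂ * g₂ - f₁ * g₁| ≤ 2 * c₂ * c₃ * Δ := by
      rw [abs_sub_comm]; exact hfgd
    calc |f₂ * g₂ - f₁ * g₁| * ((f₁ * g₁) * (f₂ * g₂))⁻¹
        ≤ (2 * c₂ * c₃ * Δ) * m ^ 2 :=
          mul_le_mul hnum hinvle (by positivity) (by positivity)
      _ = 2 * c₂ * c₃ * m ^ 2 * Δ := by ring
  have hV₁n : ‖V₁‖ ≤ 2 * c₂ * c₃ := by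
    calc ‖V₁‖ ≤ ‖f₁ • B₁‖ + ‖g₁ • A₁‖ := norm_add_le _ _
      _ = |f₁| * ‖B₁‖ + |g₁| * ‖A₁‖ := by
          rw [norm_smul, norm_smul, Real.norm_eq_abs, Real.norm_eq_abs]
      _ ≤ c₂ * c₃ + c₂ * c₃ :=
          add_le_add
            (mul_le_mul (by rw [abs_of_pos hf₁p]; exact hf₁u.le) hB₁
              (norm_nonneg _) hc₂.le)
            (mul_le_mul (by rw [abs_of_pos hg₁p]; exact hg₁u.le) hA₁
              (norm_nonneg _) hc₂.le)
      _ = 2 * c₂ * c₃ := by ring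
  have hVd : ‖V₁ - V₂‖ ≤ 2 * (c₃ * c₃ + c₂ * c₄) * Δ := by
    have hsplit : V₁ - V₂ = (f₁ • B₁ - f₂ • B₂) + (g₁ • A₁ - g₂ • A₂) := by
      rw [hV₁d, hV₂d]; abel
    have e1 : ‖f₁ • B₁ - f₂ • B₂‖ ≤ c₃ * Δ * c₃ + c₂ * (c₄ * Δ) := by
      refine (norm_smul_sub_smul f₁ f₂ B₁ B₂).trans ?_
      exact add_le_add
        (mul_le_mul hfd hB₁ (norm_nonneg _) (by positivity))
        (mul_le_mul (by rw [abs_of_pos hf₂p]; exact hf₂u.le) hBd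
          (norm_nonneg _) hc₂.le)
    have e2 : ‖g₁ • A₁ - g₂ • A₂‖ ≤ c₃ * Δ * c₃ + c₂ * (c₄ * Δ) := by
      refine (norm_smul_sub_smul g₁ g₂ A₁ A₂).trans ?_
      exact add_le_add
        (mul_le_mul hgd hA₁ (norm_nonneg _) (by positivity))
        (mul_le_mul (by rw [abs_of_pos hg₂p]; exact hg₂u.le) hAd
          (norm_nonneg _) hc₂.le)
    calc ‖V₁ - V₂‖ ≤ ‖f₁ • B₁ - f₂ • B₂‖ + ‖g₁ • A₁ - g₂ • A₂‖ := by
          rw [hsplit]; exact norm_add_le _ _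
      _ ≤ (c₃ * Δ * c₃ + c₂ * (c₄ * Δ)) + (c₃ * Δ * c₃ + c₂ * (c₄ * Δ)) :=
          add_le_add e1 e2
      _ = 2 * (c₃ * c₃ + c₂ * c₄) * Δ := by ring
  have hss : |s₁ * s₁ - s₂ * s₂| ≤ 2 * m * (2 * c₂ * c₃ * m ^ 2) * Δ := by
    calc |s₁ * s₁ - s₂ * s₂| ≤ |s₁ - s₂| * |s₁| + |s₂| * |s₁ - s₂| :=
          abs_mul_sub_mul s₁ s₂ s₁ s₂
      _ ≤ (2 * c₂ * c₃ * m ^ 2 * Δ) * m + m * (2 * c₂ * c₃ * m ^ 2 * Δ) :=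
          add_le_add
            (mul_le_mul hsd hs₁a (abs_nonneg _) (by positivity))
            (mul_le_mul hs₂a hsd (abs_nonneg _) hm0.le)
      _ = 2 * m * (2 * c₂ * c₃ * m ^ 2) * Δ := by ring
  calc ‖(s₁ * s₁) • V₁ - (s₂ * s₂) • V₂‖
      ≤ |s₁ * s₁ - s₂ * s₂| * ‖V₁‖ + |s₂ * s₂| * ‖V₁ - V₂‖ :=
        norm_smul_sub_smul _ _ _ _
    _ ≤ (2 * m * (2 * c₂ * c₃ * m ^ 2) * Δ) * (2 * c₂ * c₃) +
          (m * m) * (2 * (c₃ * c₃ + c₂ * c₄) * Δ) := by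
        refine add_le_add
          (mul_le_mul hss hV₁n (norm_nonneg _) (by positivity))
          (mul_le_mul ?_ hVd (norm_nonneg _) (by positivity))
        rw [abs_mul]
        exact mul_le_mul hs₂a hs₂a (abs_nonneg _) hm0.le
    _ = Lconst c₁ c₂ c₃ c₄ * Δ := by rw [Lconst, hmd]; ring

set_option maxHeartbeats 800000 in
lemma Qlip {d p : ℕ} {ρ : EuclideanSpace ℝ (Fin p) → Pt d → ℝ}
    {βs : EuclideanSpace ℝ (Fin p)} {ε c₁ c₂ c₃ c₄ : ℝ}
    (hρpos : ∀ b x, 0 < ρ b x) (hρC2 : ∀ x, ContDiff ℝ 2 fun b => ρ b x)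
    (hc₁ : 0 < c₁)
    (hbound : ∀ b : EuclideanSpace ℝ (Fin p), ‖b - βs‖ ≤ ε → ∀ x : Pt d,
      c₁ < ρ b x ∧ ρ b x < c₂ ∧
      ‖fderiv ℝ (fun b' => ρ b' x) b‖ < c₃ ∧
      ‖fderiv ℝ (fun b' => fderiv ℝ (fun b'' => ρ b'' x) b') b‖ < c₄)
    (x y : Pt d) {b₁ b₂ : EuclideanSpace ℝ (Fin p)}
    (h₁ : ‖b₁ - βs‖ ≤ ε) (h₂ : ‖b₂ - βs‖ ≤ ε) :
    ‖(ρ b₁ x * ρ b₁ y)⁻¹ • gradient (fun b' => Real.log (ρ b' x * ρ b' y)) b₁ -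
      (ρ b₂ x * ρ b₂ y)⁻¹ • gradient (fun b' => Real.log (ρ b' x * ρ b' y)) b₂‖ ≤
      Lconst c₁ c₂ c₃ c₄ * ‖b₁ - b₂‖ := by
  have hmem : ∀ b : EuclideanSpace ℝ (Fin p), ‖b - βs‖ ≤ ε →
      b ∈ Metric.closedBall βs ε := by
    intro b hb; rwa [Metric.mem_closedBall, dist_eq_norm]
  have hd1 : ∀ w : Pt d, Differentiable ℝ (fun b => ρ b w) :=
    fun w => (hρC2 w).differentiable (by norm_num)
  have hd2 : ∀ w : Pt d, Differentiable ℝ (fun b => fderiv ℝ (fun b' => ρ b' w) b) :=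
    fun w => ((hρC2 w).fderiv_right (m := 1) (by norm_num)).differentiable (by norm_num)
  have lipρ : ∀ w : Pt d, |ρ b₁ w - ρ b₂ w| ≤ c₃ * ‖b₁ - b₂‖ := by
    intro w
    have h := Convex.norm_image_sub_le_of_norm_fderiv_le (f := fun b => ρ b w)
      (s := Metric.closedBall βs ε)
      (fun z _ => (hd1 w).differentiableAt)
      (fun z hz => ((hbound z (by rwa [Metric.mem_closedBall, dist_eq_norm] at hz) w).2.2.1).le)
      (convex_closedBall βs ε) (hmem b₂ h₂) (hmem b₁ h₁)
    simpa [Real.norm_eq_abs] using h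
  have lipD : ∀ w : Pt d,
      ‖fderiv ℝ (fun b' => ρ b' w) b₁ - fderiv ℝ (fun b' => ρ b' w) b₂‖ ≤
        c₄ * ‖b₁ - b₂‖ := by
    intro w
    exact Convex.norm_image_sub_le_of_norm_fderiv_le
      (f := fun b => fderiv ℝ (fun b' => ρ b' w) b) (s := Metric.closedBall βs ε)
      (fun z _ => (hd2 w).differentiableAt)
      (fun z hz => ((hbound z (by rwa [Metric.mem_closedBall, dist_eq_norm] at hz) w).2.2.2).le)
      (convex_closedBall βs ε) (hmem b₂ h₂) (hmem b₁ h₁)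
  have grad_eq : ∀ b : EuclideanSpace ℝ (Fin p),
      gradient (fun b' => Real.log (ρ b' x * ρ b' y)) b =
        (InnerProductSpace.toDual ℝ (EuclideanSpace ℝ (Fin p))).symm
          ((ρ b x * ρ b y)⁻¹ •
            (ρ b x • fderiv ℝ (fun b' => ρ b' y) b +
              ρ b y • fderiv ℝ (fun b' => ρ b' x) b)) := by
    intro b
    have hA : HasFDerivAt (fun b' => ρ b' x) (fderiv ℝ (fun b' => ρ b' x) b) b :=
      ((hd1 x) b).hasFDerivAt
    have hB : HasFDerivAt (fun b' => ρ b' y) (fderiv ℝ (fun b' => ρ b' y) b) b :=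
      ((hd1 y) b).hasFDerivAt
    have hMul := hA.mul hB
    have hne : ρ b x * ρ b y ≠ 0 := (mul_pos (hρpos b x) (hρpos b y)).ne'
    have hLog := hMul.log hne
    have hg : gradient (fun b' => Real.log (ρ b' x * ρ b' y)) b =
        (InnerProductSpace.toDual ℝ (EuclideanSpace ℝ (Fin p))).symm
          (fderiv ℝ (fun b' => Real.log (ρ b' x * ρ b' y)) b) := rfl
    rw [hg]; exact congrArg _ hLog.fderiv
  have hrw : ∀ (s : ℝ) (V : StrongDual ℝ (EuclideanSpace ℝ (Fin p))),
      s • (InnerProductSpace.toDual ℝ (EuclideanSpace ℝ (Fin p))).symm (s • V) =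
        (InnerProductSpace.toDual ℝ (EuclideanSpace ℝ (Fin p))).symm ((s * s) • V) := by
    intro s V; simp [smul_smul]
  rw [grad_eq b₁, grad_eq b₂, hrw, hrw, ← map_sub,
    LinearIsometryEquiv.norm_map]
  obtain ⟨hf₁l, hf₁u, hA₁n, hA₁n'⟩ := hbound b₁ h₁ x
  obtain ⟨hg₁l, hg₁u, hB₁n, -⟩ := hbound b₁ h₁ y
  obtain ⟨hf₂l, hf₂u, -, -⟩ := hbound b₂ h₂ x
  obtain ⟨hg₂l, hg₂u, -, -⟩ := hbound b₂ h₂ y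
  have hc₂ : 0 < c₂ := hc₁.trans (hf₁l.trans hf₁u)
  have hc₃ : 0 < c₃ := lt_of_le_of_lt (norm_nonneg _) hA₁n
  have hc₄ : 0 < c₄ := lt_of_le_of_lt (norm_nonneg (fderiv ℝ (fun b' => fderiv ℝ (fun b'' => ρ b'' x) b') b₁)) hA₁n'
  exact core_estimate hc₁ hc₂ hc₃ hc₄ (norm_nonneg _)
    hf₁l hf₁u hg₁l hg₁u hf₂l hf₂u hg₂l hg₂u
    hA₁n.le hB₁n.le (lipρ x) (lipρ y) (lipD x) (lipD y)



lemma isCompact_Wn (d n : ℕ) : IsCompact (Wn d n) := by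
  set c : ℝ := (n : ℝ) ^ ((1 : ℝ) / (d : ℝ)) / 2 with hc
  have hclosed : IsClosed (Wn d n) := by
    have h : Wn d n = ⋂ i : Fin d, {x : Pt d | |x i| ≤ c} := by
      ext x; simp [Wn, Set.mem_iInter, hc]
    rw [h]
    refine isClosed_iInter fun i => ?_
    exact isClosed_le ((EuclideanSpace.proj (𝕜 := ℝ) i).continuous.abs) continuous_const
  have hsub : Wn d n ⊆ Metric.closedBall 0 (Real.sqrt (d * c ^ 2)) := by
    intro x hx
    rw [Metric.mem_closedBall, dist_zero_right, EuclideanSpace.norm_eq]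
    apply Real.sqrt_le_sqrt
    calc ∑ i : Fin d, ‖x i‖ ^ 2 ≤ ∑ _i : Fin d, c ^ 2 := by
          refine Finset.sum_le_sum fun i _ => ?_
          rw [Real.norm_eq_abs]
          exact pow_le_pow_left₀ (abs_nonneg _) (hx i) 2
      _ = d * c ^ 2 := by simp [Finset.sum_const]
  exact (isCompact_closedBall 0 _).of_isClosed_subset hclosed hsub

lemma en_nonneg (d n : ℕ) (x y : Pt d) : 0 ≤ en d n x y :=
  inv_nonneg.2 ENNReal.toReal_nonneg

lemma pairs_finite {α : Type*} {A : Set α} (hA : A.Finite) : (pairs A).Finite :=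
  (hA.prod hA).subset fun q hq => ⟨hq.1, hq.2.1⟩

lemma Khat_nonneg {Ω : Type*} {d p : ℕ} (P : Ω → Set (Pt d))
    (ρ : EuclideanSpace ℝ (Fin p) → Pt d → ℝ)
    (hρpos : ∀ b x, 0 < ρ b x)
    (n : ℕ) (b : EuclideanSpace ℝ (Fin p)) (r : ℝ) (ω : Ω) :
    0 ≤ Khat P ρ n b r ω := by
  refine tsum_nonneg fun q => ?_
  dsimp only
  split_ifs with h
  · exact div_nonneg (en_nonneg d n _ _) (mul_pos (hρpos b _) (hρpos b _)).le
  · exact le_rfl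

set_option maxHeartbeats 1000000 in
lemma Hfun_diff_le {Ω : Type*} {d p : ℕ} (P : Ω → Set (Pt d))
    (ρ : EuclideanSpace ℝ (Fin p) → Pt d → ℝ) (βs : EuclideanSpace ℝ (Fin p))
    (hρpos : ∀ b x, 0 < ρ b x) (hρC2 : ∀ x, ContDiff ℝ 2 fun b => ρ b x)
    {ε c₁ c₂ c₃ c₄ : ℝ} (hε : 0 ≤ ε) (hc₁ : 0 < c₁)
    (hbound : ∀ b : EuclideanSpace ℝ (Fin p), ‖b - βs‖ ≤ ε → ∀ x : Pt d,
      c₁ < ρ b x ∧ ρ b x < c₂ ∧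
      ‖fderiv ℝ (fun b' => ρ b' x) b‖ < c₃ ∧
      ‖fderiv ℝ (fun b' => fderiv ℝ (fun b'' => ρ b'' x) b') b‖ < c₄)
    (n : ℕ) (r : ℝ) (ω : Ω) (hfin : (P ω ∩ Wn d n).Finite)
    {b₁ b₂ : EuclideanSpace ℝ (Fin p)} (h₁ : ‖b₁ - βs‖ ≤ ε) (h₂ : ‖b₂ - βs‖ ≤ ε) :
    ‖Hfun P ρ n b₁ r ω - Hfun P ρ n b₂ r ω‖ ≤
      Lconst c₁ c₂ c₃ c₄ * ‖b₁ - b₂‖ * (c₂ ^ 2 * Khat P ρ n βs r ω) := by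
  classical
  have hfinP : (pairs (P ω ∩ Wn d n)).Finite := pairs_finite hfin
  haveI : Finite ↥(pairs (P ω ∩ Wn d n)) := hfinP.to_subtype
  have hβsmem : ‖βs - βs‖ ≤ ε := by simp [hε]
  -- nonnegativity of the Lipschitz constant
  have hc₂ : 0 < c₂ := by
    obtain ⟨h1, h2, -, -⟩ := hbound βs hβsmem 0
    exact hc₁.trans (h1.trans h2)
  have hc₃ : 0 < c₃ := lt_of_le_of_lt (norm_nonneg _) (hbound βs hβsmem 0).2.2.1
  have hc₄ : 0 < c₄ := lt_of_le_of_lt (norm_nonneg (fderiv ℝ (fun b' => fderiv ℝ (fun b'' => ρ b'' 0) b') βs)) (hbound βs hβsmem 0).2.2.2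
  have hL : 0 ≤ Lconst c₁ c₂ c₃ c₄ := (Lconst_pos hc₁ hc₂ hc₃ hc₄).le
  set L := Lconst c₁ c₂ c₃ c₄ with hLdef
  set Δ := ‖b₁ - b₂‖ with hΔd
  have hΔ : 0 ≤ Δ := norm_nonneg _
  -- per-pair functions
  set F : EuclideanSpace ℝ (Fin p) → ↥(pairs (P ω ∩ Wn d n)) → EuclideanSpace ℝ (Fin p) :=
    fun b q =>
      if ‖q.val.1 - q.val.2‖ ≤ r then
        (en d n q.val.1 q.val.2 / (ρ b q.val.1 * ρ b q.val.2)) •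
          gradient (fun b' => Real.log (ρ b' q.val.1 * ρ b' q.val.2)) b
      else 0 with hFdef
  set G : ↥(pairs (P ω ∩ Wn d n)) → ℝ := fun q =>
    if ‖q.val.1 - q.val.2‖ ≤ r then
      en d n q.val.1 q.val.2 / (ρ βs q.val.1 * ρ βs q.val.2) else 0 with hGdef
  have hH : ∀ b : EuclideanSpace ℝ (Fin p),
      Hfun P ρ n b r ω = -∑' q : pairs (P ω ∩ Wn d n), F b q := fun b => rfl
  have hKh : Khat P ρ n βs r ω = ∑' q : pairs (P ω ∩ Wn d n), G q := rfl
  -- key per-pair estimate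
  have key : ∀ q : pairs (P ω ∩ Wn d n),
      ‖F b₁ q - F b₂ q‖ ≤ (L * Δ * c₂ ^ 2) * G q := by
    intro q
    rw [hFdef, hGdef]
    dsimp only
    by_cases hxy : ‖q.val.1 - q.val.2‖ ≤ r
    · simp only [if_pos hxy]
      set x := q.val.1
      set y := q.val.2
      have hen : 0 ≤ en d n x y := en_nonneg d n x y
      have hρρ : 0 < ρ βs x * ρ βs y := mul_pos (hρpos βs x) (hρpos βs y)
      have hsm : ∀ b : EuclideanSpace ℝ (Fin p),
          (en d n x y / (ρ b x * ρ b y)) •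
            gradient (fun b' => Real.log (ρ b' x * ρ b' y)) b =
          en d n x y • ((ρ b x * ρ b y)⁻¹ •
            gradient (fun b' => Real.log (ρ b' x * ρ b' y)) b) := by
        intro b; rw [div_eq_mul_inv, mul_smul]
      rw [hsm b₁, hsm b₂, ← smul_sub, norm_smul, Real.norm_eq_abs, abs_of_nonneg hen]
      have hQ := Qlip hρpos hρC2 hc₁ hbound x y h₁ h₂
      calc en d n x y * ‖(ρ b₁ x * ρ b₁ y)⁻¹ •
              gradient (fun b' => Real.log (ρ b' x * ρ b' y)) b₁ -
            (ρ b₂ x * ρ b₂ y)⁻¹ •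
              gradient (fun b' => Real.log (ρ b' x * ρ b' y)) b₂‖
          ≤ en d n x y * (L * Δ) :=
            mul_le_mul_of_nonneg_left hQ hen
        _ ≤ (L * Δ * c₂ ^ 2) * (en d n x y / (ρ βs x * ρ βs y)) := by
            rw [div_eq_mul_inv]
            have h1 : ρ βs x * ρ βs y ≤ c₂ ^ 2 := by
              obtain ⟨ha, hb, -, -⟩ := hbound βs hβsmem x
              obtain ⟨hc, hd, -, -⟩ := hbound βs hβsmem y
              nlinarith
            have h2 : en d n x y ≤ c₂ ^ 2 * (en d n x y * (ρ βs x * ρ βs y)⁻¹) := by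
              rw [mul_comm (c₂ ^ 2), mul_assoc]
              nlinarith [mul_le_mul_of_nonneg_left h1 hen,
                mul_pos (inv_pos.2 hρρ) hρρ,
                mul_inv_cancel₀ hρρ.ne',
                mul_le_mul_of_nonneg_right
                  (mul_le_mul_of_nonneg_left h1 hen) (inv_pos.2 hρρ).le]
            calc en d n x y * (L * Δ) = (L * Δ) * en d n x y := by ring
              _ ≤ (L * Δ) * (c₂ ^ 2 * (en d n x y * (ρ βs x * ρ βs y)⁻¹)) :=
                  mul_le_mul_of_nonneg_left h2 (by positivity)
              _ = (L * Δ * c₂ ^ 2) * (en d n x y * (ρ βs x * ρ βs y)⁻¹) := by ring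
    · simp only [if_neg hxy]
      simp
  -- assemble
  rw [hH b₁, hH b₂]
  have hnegsub : (-∑' q : pairs (P ω ∩ Wn d n), F b₁ q) -
      (-∑' q : pairs (P ω ∩ Wn d n), F b₂ q) =
      (∑' q : pairs (P ω ∩ Wn d n), F b₂ q) -
        ∑' q : pairs (P ω ∩ Wn d n), F b₁ q := by abel
  rw [hnegsub, norm_sub_rev, ← Summable.tsum_sub Summable.of_finite Summable.of_finite]
  calc ‖∑' q : pairs (P ω ∩ Wn d n), (F b₁ q - F b₂ q)‖
      ≤ ∑' q : pairs (P ω ∩ Wn d n), ‖F b₁ q - F b₂ q‖ :=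
        norm_tsum_le_tsum_norm Summable.of_finite
    _ ≤ ∑' q : pairs (P ω ∩ Wn d n), (L * Δ * c₂ ^ 2) * G q :=
        Summable.tsum_le_tsum key Summable.of_finite Summable.of_finite
    _ = (L * Δ * c₂ ^ 2) * ∑' q : pairs (P ω ∩ Wn d n), G q := tsum_mul_left
    _ = L * Δ * (c₂ ^ 2 * Khat P ρ n βs r ω) := by rw [hKh]; ring


end KFunCLT

open KFunCLT

/-- if `‖β̃_{n,r} - β*‖ ≤ ‖β̂_n - β*‖` a.s., then
`H_{n,β̃_{n,r}}(r) - H_{n,β*}(r) → 0` and `H_{n,β̃_{n,r}}(r) - H_{n,β̂_n}(r) → 0`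
in probability. -/
theorem statement0
    {d p : ℕ} (hd : 1 ≤ d)
    {Ω : Type*} [MeasurableSpace Ω] (μ : Measure Ω) [IsProbabilityMeasure μ]
    (P : Ω → Set (Pt d))
    (hPloc : ∀ ω, ∀ K : Set (Pt d), IsCompact K → (P ω ∩ K).Finite)
    (ρ : EuclideanSpace ℝ (Fin p) → Pt d → ℝ) (βs : EuclideanSpace ℝ (Fin p))
    (hρpos : ∀ b x, 0 < ρ b x)
    (hρC2 : ∀ x, ContDiff ℝ 2 fun b => ρ b x)
    (hR : AssumptionR ρ βs)
    (βhat : ℕ → Ω → EuclideanSpace ℝ (Fin p))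
    (hβcons : TendstoInMeasure μ βhat atTop fun _ => βs)
    (K : ℝ → ℝ)
    (hKcons : ∀ r : ℝ, 0 < r →
      TendstoInMeasure μ (fun n ω => Khat P ρ n βs r ω) atTop fun _ => K r)
    (r : ℝ) (hr : 0 < r)
    (βtil : ℕ → Ω → EuclideanSpace ℝ (Fin p))
    (hβtil : ∀ n, ∀ᵐ ω ∂μ, ‖βtil n ω - βs‖ ≤ ‖βhat n ω - βs‖) :
    TendstoInMeasure μ
      (fun n ω => Hfun P ρ n (βtil n ω) r ω - Hfun P ρ n βs r ω) atTop
      (fun _ => (0 : EuclideanSpace ℝ (Fin p))) ∧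
    TendstoInMeasure μ
      (fun n ω => Hfun P ρ n (βtil n ω) r ω - Hfun P ρ n (βhat n ω) r ω) atTop
      (fun _ => (0 : EuclideanSpace ℝ (Fin p))) := by
  obtain ⟨ε, hε, c₁, c₂, c₃, c₄, hc₁, hc₂, hc₃, hc₄, hbound⟩ := hR
  set L := Lconst c₁ c₂ c₃ c₄ with hLdef
  have hLpos : 0 < L := Lconst_pos hc₁ hc₂ hc₃ hc₄
  set C := L * c₂ ^ 2 * (|K r| + 1) with hCdef
  have hCpos : 0 < C := by positivity
  have hfin : ∀ (ω : Ω) (n : ℕ), (P ω ∩ Wn d n).Finite :=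
    fun ω n => hPloc ω _ (isCompact_Wn d n)
  have main : ∀ t : ℝ, 0 < t →
      Tendsto (fun n => μ {ω | t ≤ ‖βhat n ω - βs‖}) atTop (𝓝 0) := by
    intro t ht
    have h := tendstoInMeasure_iff_dist.1 hβcons t ht
    simpa [dist_eq_norm] using h
  have hKm : Tendsto (fun n => μ {ω | 1 ≤ |Khat P ρ n βs r ω - K r|}) atTop (𝓝 0) := by
    have h := tendstoInMeasure_iff_dist.1 (hKcons r hr) 1 one_pos
    simpa [Real.dist_eq] using h
  have hNull : ∀ n, μ {ω | ¬ ‖βtil n ω - βs‖ ≤ ‖βhat n ω - βs‖} = 0 :=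
    fun n => ae_iff.mp (hβtil n)
  have squeeze : ∀ (t : ℝ), 0 < t →
      ∀ (D : ℕ → Ω → EuclideanSpace ℝ (Fin p)) (δ : ℝ),
      (∀ n, {ω | δ ≤ dist (D n ω) 0} ⊆
        ({ω | t ≤ ‖βhat n ω - βs‖} ∪ {ω | 1 ≤ |Khat P ρ n βs r ω - K r|}) ∪
          {ω | ¬ ‖βtil n ω - βs‖ ≤ ‖βhat n ω - βs‖}) →
      Tendsto (fun n => μ {ω | δ ≤ dist (D n ω) 0}) atTop (𝓝 0) := by
    intro t ht D δ hsub
    have hsum : Tendsto (fun n => μ {ω | t ≤ ‖βhat n ω - βs‖} +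
        μ {ω | 1 ≤ |Khat P ρ n βs r ω - K r|}) atTop (𝓝 0) := by
      have h := (main t ht).add hKm
      simpa using h
    refine tendsto_of_tendsto_of_tendsto_of_le_of_le tendsto_const_nhds hsum
      (fun n => zero_le) (fun n => ?_)
    calc μ {ω | δ ≤ dist (D n ω) 0}
        ≤ μ (({ω | t ≤ ‖βhat n ω - βs‖} ∪ {ω | 1 ≤ |Khat P ρ n βs r ω - K r|}) ∪
            {ω | ¬ ‖βtil n ω - βs‖ ≤ ‖βhat n ω - βs‖}) := measure_mono (hsub n)
      _ ≤ μ ({ω | t ≤ ‖βhat n ω - βs‖} ∪ {ω | 1 ≤ |Khat P ρ n βs r ω - K r|}) +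
            μ {ω | ¬ ‖βtil n ω - βs‖ ≤ ‖βhat n ω - βs‖} := measure_union_le _ _
      _ = μ ({ω | t ≤ ‖βhat n ω - βs‖} ∪ {ω | 1 ≤ |Khat P ρ n βs r ω - K r|}) := by
            rw [hNull n, add_zero]
      _ ≤ μ {ω | t ≤ ‖βhat n ω - βs‖} + μ {ω | 1 ≤ |Khat P ρ n βs r ω - K r|} :=
            measure_union_le _ _
  constructor
  · refine tendstoInMeasure_iff_dist.2 fun δ hδ => ?_
    set t := min ε (δ / (C + 1)) with htdef
    have ht : 0 < t := lt_min hε (by positivity)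
    refine squeeze t ht _ δ ?_
    intro n ω hω
    simp only [Set.mem_setOf_eq, dist_zero_right] at hω
    by_contra hcon
    simp only [Set.mem_union, Set.mem_setOf_eq, not_or, not_le, not_not] at hcon
    obtain ⟨⟨hb, hk⟩, h3⟩ := hcon
    replace h3 : ‖βtil n ω - βs‖ ≤ ‖βhat n ω - βs‖ := not_lt.mp h3
    have hβtε : ‖βtil n ω - βs‖ ≤ ε := h3.trans (hb.le.trans (min_le_left _ _))
    have hbd := Hfun_diff_le P ρ βs hρpos hρC2 hε.le hc₁ hbound n r ω (hfin ω n)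
      hβtε (by simp [hε.le] : ‖βs - βs‖ ≤ ε)
    have hKnn : 0 ≤ Khat P ρ n βs r ω := Khat_nonneg P ρ hρpos n βs r ω
    have hKub : Khat P ρ n βs r ω ≤ |K r| + 1 := by
      have h5 := (abs_lt.mp hk).2
      have h6 := le_abs_self (K r)
      linarith
    have hub : ‖Hfun P ρ n (βtil n ω) r ω - Hfun P ρ n βs r ω‖ ≤
        C * ‖βtil n ω - βs‖ := by
      refine hbd.trans ?_
      calc L * ‖βtil n ω - βs‖ * (c₂ ^ 2 * Khat P ρ n βs r ω)
          ≤ L * ‖βtil n ω - βs‖ * (c₂ ^ 2 * (|K r| + 1)) := by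
            refine mul_le_mul_of_nonneg_left ?_ (by positivity)
            exact mul_le_mul_of_nonneg_left hKub (by positivity)
        _ = C * ‖βtil n ω - βs‖ := by rw [hCdef]; ring
    have h4 : ‖βtil n ω - βs‖ < t := lt_of_le_of_lt h3 hb
    have h7 : C * (δ / (C + 1)) < δ := by
      calc C * (δ / (C + 1)) < (C + 1) * (δ / (C + 1)) := by
            exact mul_lt_mul_of_pos_right (by linarith) (by positivity)
        _ = δ := by field_simp
    have h8 : C * t ≤ C * (δ / (C + 1)) :=
      mul_le_mul_of_nonneg_left (min_le_right _ _) hCpos.le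
    have h9 : C * ‖βtil n ω - βs‖ < C * t := mul_lt_mul_of_pos_left h4 hCpos
    linarith
  · refine tendstoInMeasure_iff_dist.2 fun δ hδ => ?_
    set t := min ε (δ / (2 * C + 1)) with htdef
    have ht : 0 < t := lt_min hε (by positivity)
    refine squeeze t ht _ δ ?_
    intro n ω hω
    simp only [Set.mem_setOf_eq, dist_zero_right] at hω
    by_contra hcon
    simp only [Set.mem_union, Set.mem_setOf_eq, not_or, not_le, not_not] at hcon
    obtain ⟨⟨hb, hk⟩, h3⟩ := hcon
    replace h3 : ‖βtil n ω - βs‖ ≤ ‖βhat n ω - βs‖ := not_lt.mp h3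
    have hβhε : ‖βhat n ω - βs‖ ≤ ε := hb.le.trans (min_le_left _ _)
    have hβtε : ‖βtil n ω - βs‖ ≤ ε := h3.trans hβhε
    have hbd := Hfun_diff_le P ρ βs hρpos hρC2 hε.le hc₁ hbound n r ω (hfin ω n)
      hβtε hβhε
    have hKnn : 0 ≤ Khat P ρ n βs r ω := Khat_nonneg P ρ hρpos n βs r ω
    have hKub : Khat P ρ n βs r ω ≤ |K r| + 1 := by
      have h5 := (abs_lt.mp hk).2
      have h6 := le_abs_self (K r)
      linarith
    have htri : ‖βtil n ω - βhat n ω‖ ≤ 2 * ‖βhat n ω - βs‖ := by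
      have heq : βtil n ω - βhat n ω = (βtil n ω - βs) - (βhat n ω - βs) := by abel
      calc ‖βtil n ω - βhat n ω‖ = ‖(βtil n ω - βs) - (βhat n ω - βs)‖ := by rw [heq]
        _ ≤ ‖βtil n ω - βs‖ + ‖βhat n ω - βs‖ := norm_sub_le _ _
        _ ≤ 2 * ‖βhat n ω - βs‖ := by linarith
    have hub : ‖Hfun P ρ n (βtil n ω) r ω - Hfun P ρ n (βhat n ω) r ω‖ ≤
        C * ‖βtil n ω - βhat n ω‖ := by
      refine hbd.trans ?_
      calc L * ‖βtil n ω - βhat n ω‖ * (c₂ ^ 2 * Khat P ρ n βs r ω)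
          ≤ L * ‖βtil n ω - βhat n ω‖ * (c₂ ^ 2 * (|K r| + 1)) := by
            refine mul_le_mul_of_nonneg_left ?_ (by positivity)
            exact mul_le_mul_of_nonneg_left hKub (by positivity)
        _ = C * ‖βtil n ω - βhat n ω‖ := by rw [hCdef]; ring
    have h4 : ‖βtil n ω - βhat n ω‖ < 2 * t := by
      have := lt_of_le_of_lt (le_refl ‖βhat n ω - βs‖) hb
      calc ‖βtil n ω - βhat n ω‖ ≤ 2 * ‖βhat n ω - βs‖ := htri
        _ < 2 * t := by linarith
    have h7 : C * (2 * (δ / (2 * C + 1))) < δ := by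
      have : C * (2 * (δ / (2 * C + 1))) = (2 * C) * (δ / (2 * C + 1)) := by ring
      rw [this]
      calc (2 * C) * (δ / (2 * C + 1)) < (2 * C + 1) * (δ / (2 * C + 1)) := by
            exact mul_lt_mul_of_pos_right (by linarith) (by positivity)
        _ = δ := by field_simp
    have h8 : C * (2 * t) ≤ C * (2 * (δ / (2 * C + 1))) := by
      refine mul_le_mul_of_nonneg_left ?_ hCpos.le
      have := min_le_right ε (δ / (2 * C + 1))
      linarith
    have h9 : C * ‖βtil n ω - βhat n ω‖ < C * (2 * t) :=
      mul_lt_mul_of_pos_left h4 hCpos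
    linarith
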